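/- The infimum of the function F(u,v) = 1/((1+√(1−v))·u) + 1/((1+√(1−u))·v) over pairs (u,v) with 0 < u ≤ 1 and 0 < v ≤ 1 equals 27/16. -/
import Mathlib

lemma key_bound (t : ℝ) (ht : 0 < t) (ht1 : t ≤ 1) :
    (1 + Real.sqrt (1 - t)) * t ≤ 32 / 27 := by
  set s := Real.sqrt (1 - t) with hs
  have hs0 : 0 ≤ s := Real.sqrt_nonneg _
  have hs2 : s ^ 2 = 1 - t := Real.sq_sqrt (by linarith)
  nlinarith [mul_nonneg (sq_nonneg (s - 1/3)) (by linarith : (0:ℝ) ≤ s + 5/3)]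

theorem stmt_2 :
    IsGLB {x : ℝ | ∃ u v : ℝ, 0 < u ∧ u ≤ 1 ∧ 0 < v ∧ v ≤ 1 ∧
        x = 1 / ((1 + Real.sqrt (1 - v)) * u) + 1 / ((1 + Real.sqrt (1 - u)) * v)}
      (27 / 16) := by
  have hmem : (27 / 16 : ℝ) ∈ {x : ℝ | ∃ u v : ℝ, 0 < u ∧ u ≤ 1 ∧ 0 < v ∧ v ≤ 1 ∧
      x = 1 / ((1 + Real.sqrt (1 - v)) * u) + 1 / ((1 + Real.sqrt (1 - u)) * v)} := by
    refine ⟨8/9, 8/9, by norm_num, by norm_num, by norm_num, by norm_num, ?_⟩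
    have h : Real.sqrt (1 - 8/9) = 1/3 := by
      rw [show (1:ℝ) - 8/9 = (1/3)^2 by norm_num, Real.sqrt_sq (by norm_num)]
    rw [h]; norm_num
  constructor
  · rintro x ⟨u, v, hu, hu1, hv, hv1, rfl⟩
    have hsv : 0 ≤ Real.sqrt (1 - v) := Real.sqrt_nonneg _
    have hsu : 0 ≤ Real.sqrt (1 - u) := Real.sqrt_nonneg _
    set a := (1 + Real.sqrt (1 - v)) * u with ha_def
    set b := (1 + Real.sqrt (1 - u)) * v with hb_def
    have ha : 0 < a := mul_pos (by linarith) hu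
    have hb : 0 < b := mul_pos (by linarith) hv
    have h1 : (1 + Real.sqrt (1 - v)) * v ≤ 32 / 27 := key_bound v hv hv1
    have h2 : (1 + Real.sqrt (1 - u)) * u ≤ 32 / 27 := key_bound u hu hu1
    have h1' : 0 ≤ (1 + Real.sqrt (1 - v)) * v := le_of_lt (mul_pos (by linarith) hv)
    have h2' : 0 ≤ (1 + Real.sqrt (1 - u)) * u := le_of_lt (mul_pos (by linarith) hu)
    have hab : a * b ≤ (32/27) * (32/27) := by
      have : a * b = ((1 + Real.sqrt (1 - v)) * v) * ((1 + Real.sqrt (1 - u)) * u) := by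
        rw [ha_def, hb_def]; ring
      rw [this]
      exact mul_le_mul h1 h2 h2' (by norm_num)
    rw [div_add_div _ _ (ne_of_gt ha) (ne_of_gt hb), le_div_iff₀ (mul_pos ha hb)]
    nlinarith [sq_nonneg (a - b), mul_pos ha hb, sq_nonneg (a + b)]
  · intro y hy
    exact hy hmem
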